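/- Let n ≥ 1 and let m1, m2 be positive integers with m1 + m2 = 2n. Let Z1 be a monic polynomial of degree m1 with real coefficients and all roots in [√(−b1), √(−a1)], and let Z2 be a monic polynomial of degree m2 with real coefficients and all roots in [√(a2), √(b2)]. Set ε1 = sup_{u ∈ [√(−b1),√(−a1)]} |Z1(u)/Z1(−u)|, ε2 = sup_{u ∈ [√(a2),√(b2)]} |Z2(u)/Z2(−u)|, and ε = max{ε1, ε2}, and define H(s) = Z1(−i s)·Z2(s). Let P, Q be the unique complex polynomials with deg P ≤ n−1, deg Q ≤ n and H(s) = −s·P(s²) + Q(s²) for all s. If ε < 1, then for every z ∈ K one has Q(z) ≠ 0 and |P(z)/(Q(z)·F(z)) − 1| ≤ 2ε/(1−ε). -/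

import Mathlib

/-- The limiting-absorption branch of the inverse square root on the nonzero reals:
`F(z) = z^{−1/2}` for `z > 0` and `F(z) = −i·(−z)^{−1/2}` for `z < 0`. -/
noncomputable def Fbranch (z : ℝ) : ℂ :=
  if 0 < z then ((Real.sqrt z : ℂ))⁻¹ else -Complex.I * ((Real.sqrt (-z) : ℂ))⁻¹

open Polynomial in
lemma evalC_real (Z : ℝ[X]) (x : ℝ) :
    (Z.map (algebraMap ℝ ℂ)).eval (x : ℂ) = ((Z.eval x : ℝ) : ℂ) := by
  rw [Polynomial.eval_map, ← Polynomial.aeval_def]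
  exact Polynomial.aeval_ofReal Z x

open Polynomial in
lemma evalC_abs_conj (Z : ℝ[X]) (w : ℂ) :
    ‖(Z.map (algebraMap ℝ ℂ)).eval ((starRingEnd ℂ) w)‖ =
      ‖(Z.map (algebraMap ℝ ℂ)).eval w‖ := by
  rw [Polynomial.eval_map, ← Polynomial.aeval_def, Polynomial.eval_map,
    ← Polynomial.aeval_def, Polynomial.aeval_conj, Complex.norm_conj]

open Polynomial in
lemma evalC_ne_of_im (Z : ℝ[X]) (l r : ℝ)
    (hroots : ∀ z : ℂ, Polynomial.aeval z Z = 0 → ∃ x ∈ Set.Icc l r, z = (x : ℂ))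
    (w : ℂ) (hw : w.im ≠ 0) : (Z.map (algebraMap ℝ ℂ)).eval w ≠ 0 := by
  intro h0
  rw [Polynomial.eval_map, ← Polynomial.aeval_def] at h0
  obtain ⟨x, _, hxe⟩ := hroots w h0
  apply hw; rw [hxe]; simp

open Polynomial in
lemma sup_bound (Z : ℝ[X]) (l r : ℝ) (hl : 0 < l) (hlr : l ≤ r)
    (hroots : ∀ z : ℂ, Polynomial.aeval z Z = 0 → ∃ x ∈ Set.Icc l r, z = (x : ℂ)) :
    (∀ u ∈ Set.Icc l r, Z.eval (-u) ≠ 0) ∧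
    (0 ≤ sSup ((fun u : ℝ => |Z.eval u / Z.eval (-u)|) '' Set.Icc l r)) ∧
    (∀ u ∈ Set.Icc l r, |Z.eval u / Z.eval (-u)| ≤
      sSup ((fun u : ℝ => |Z.eval u / Z.eval (-u)|) '' Set.Icc l r)) := by
  have hden : ∀ u ∈ Set.Icc l r, Z.eval (-u) ≠ 0 := by
    intro u hu h0
    have hz : Polynomial.aeval ((-u : ℝ) : ℂ) Z = 0 := by
      rw [Polynomial.aeval_def, ← Polynomial.eval_map, evalC_real, h0, Complex.ofReal_zero]
    obtain ⟨x, hx, hxe⟩ := hroots _ hz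
    have hux : (-u : ℝ) = x := by exact_mod_cast hxe
    have := hx.1
    have := hu.1
    linarith
  have hc : ContinuousOn (fun u : ℝ => |Z.eval u / Z.eval (-u)|) (Set.Icc l r) := by
    apply ContinuousOn.abs
    exact ContinuousOn.div (Z.continuous_aeval.continuousOn)
      ((Z.continuous_aeval.comp continuous_neg).continuousOn) hden
  have hbdd : BddAbove ((fun u : ℝ => |Z.eval u / Z.eval (-u)|) '' Set.Icc l r) :=
    (isCompact_Icc.image_of_continuousOn hc).bddAbove
  have hb : ∀ u ∈ Set.Icc l r, |Z.eval u / Z.eval (-u)| ≤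
      sSup ((fun u : ℝ => |Z.eval u / Z.eval (-u)|) '' Set.Icc l r) :=
    fun u hu => le_csSup hbdd ⟨u, hu, rfl⟩
  refine ⟨hden, ?_, hb⟩
  exact le_trans (abs_nonneg _) (hb l ⟨le_refl l, hlr⟩)

open Polynomial in
lemma key (P Q : ℂ[X]) (z s h h' : ℂ) (ε : ℝ)
    (hh : h = -s * P.eval (s^2) + Q.eval (s^2))
    (hh' : h' = s * P.eval (s^2) + Q.eval (s^2))
    (hs2 : s^2 = z) (hsne : s ≠ 0)
    (hne : h' ≠ 0) (hratio : ‖h‖ ≤ ε * ‖h'‖)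
    (hε0 : 0 ≤ ε) (hε1 : ε < 1) :
    Q.eval z ≠ 0 ∧ ‖P.eval z / (Q.eval z * s⁻¹) - 1‖ ≤ 2*ε/(1-ε) := by
  have hq : Q.eval z = (h + h') / 2 := by rw [hh, hh', ← hs2]; ring
  have hp : s * P.eval z = (h' - h) / 2 := by rw [hh, hh', ← hs2]; ring
  have h1 : ‖h'‖ ≤ ‖h + h'‖ + ‖h‖ := by
    calc ‖h'‖ = ‖(h + h') + (-h)‖ := by ring_nf
    _ ≤ _ := by simpa using norm_add_le (h + h') (-h)
  have hh'pos : 0 < ‖h'‖ := norm_pos_iff.2 hne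
  have habsq : (1 - ε) * ‖h'‖ / 2 ≤ ‖Q.eval z‖ := by
    rw [hq, norm_div, Complex.norm_two]
    nlinarith
  have hqpos : 0 < ‖Q.eval z‖ := by nlinarith
  have hqne : Q.eval z ≠ 0 := by
    intro h0; rw [h0] at hqpos; simp at hqpos
  refine ⟨hqne, ?_⟩
  have h3 : s * P.eval z - Q.eval z = -h := by rw [hp, hq]; ring
  have hexpr : P.eval z / (Q.eval z * s⁻¹) - 1 = -h / Q.eval z := by
    rw [← h3]; field_simp
  rw [hexpr, norm_div, norm_neg]
  rw [div_le_div_iff₀ hqpos (by linarith : (0:ℝ) < 1 - ε)]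
  nlinarith [norm_nonneg h]

theorem stmt5 (a1 b1 a2 b2 : ℝ) (hab1 : a1 < b1) (hb1 : b1 < 0) (ha2 : 0 < a2)
    (hab2 : a2 < b2) (n : ℕ) (hn : 1 ≤ n) (m1 m2 : ℕ) (hm1 : 0 < m1) (hm2 : 0 < m2)
    (hm : m1 + m2 = 2 * n) (Z1 Z2 : Polynomial ℝ)
    (hZ1monic : Z1.Monic) (hZ1deg : Z1.natDegree = m1)
    (hZ1roots : ∀ z : ℂ, Polynomial.aeval z Z1 = 0 →
      ∃ x ∈ Set.Icc (Real.sqrt (-b1)) (Real.sqrt (-a1)), z = (x : ℂ))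
    (hZ2monic : Z2.Monic) (hZ2deg : Z2.natDegree = m2)
    (hZ2roots : ∀ z : ℂ, Polynomial.aeval z Z2 = 0 →
      ∃ x ∈ Set.Icc (Real.sqrt a2) (Real.sqrt b2), z = (x : ℂ))
    (e1 e2 : ℝ)
    (he1 : e1 = sSup ((fun u : ℝ => |Z1.eval u / Z1.eval (-u)|) ''
      Set.Icc (Real.sqrt (-b1)) (Real.sqrt (-a1))))
    (he2 : e2 = sSup ((fun u : ℝ => |Z2.eval u / Z2.eval (-u)|) ''
      Set.Icc (Real.sqrt a2) (Real.sqrt b2)))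
    (P Q : Polynomial ℂ) (hPdeg : P.degree ≤ (n - 1 : ℕ)) (hQdeg : Q.degree ≤ (n : ℕ))
    (hsplit : ∀ s : ℂ,
      (Z1.map (algebraMap ℝ ℂ)).eval (-(Complex.I * s)) * (Z2.map (algebraMap ℝ ℂ)).eval s =
        -s * P.eval (s ^ 2) + Q.eval (s ^ 2))
    (hε : max e1 e2 < 1) :
    ∀ z ∈ Set.Icc a1 b1 ∪ Set.Icc a2 b2,
      Q.eval (z : ℂ) ≠ 0 ∧
      ‖P.eval (z : ℂ) / (Q.eval (z : ℂ) * Fbranch z) - 1‖ ≤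
        2 * max e1 e2 / (1 - max e1 e2) := by
  have hsb1 : 0 < Real.sqrt (-b1) := Real.sqrt_pos.2 (by linarith)
  have hsa2 : 0 < Real.sqrt a2 := Real.sqrt_pos.2 ha2
  obtain ⟨hden1, he1nn, hbd1⟩ := sup_bound Z1 _ _ hsb1
    (Real.sqrt_le_sqrt (by linarith)) hZ1roots
  obtain ⟨hden2, he2nn, hbd2⟩ := sup_bound Z2 _ _ hsa2
    (Real.sqrt_le_sqrt (by linarith)) hZ2roots
  rw [← he1] at he1nn hbd1
  rw [← he2] at he2nn hbd2
  have hε0 : 0 ≤ max e1 e2 := le_trans he1nn (le_max_left _ _)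
  intro z hz
  rcases hz with hz | hz
  · -- z ∈ [a1, b1], z < 0
    have hz0 : z < 0 := lt_of_le_of_lt hz.2 hb1
    set u := Real.sqrt (-z) with hudef
    have hu0 : 0 < u := Real.sqrt_pos.2 (by linarith)
    have hu2 : u ^ 2 = -z := Real.sq_sqrt (by linarith)
    have huI : u ∈ Set.Icc (Real.sqrt (-b1)) (Real.sqrt (-a1)) :=
      ⟨Real.sqrt_le_sqrt (by linarith [hz.1, hz.2]), Real.sqrt_le_sqrt (by linarith [hz.1])⟩
    set s : ℂ := Complex.I * (u : ℂ) with hsdef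
    have hs2 : s ^ 2 = (z : ℂ) := by
      rw [hsdef, mul_pow, Complex.I_sq, ← Complex.ofReal_pow, hu2]
      push_cast; ring
    have hsne : s ≠ 0 := by
      rw [hsdef]
      exact mul_ne_zero Complex.I_ne_zero (by exact_mod_cast hu0.ne')
    have hF : Fbranch z = s⁻¹ := by
      rw [Fbranch, if_neg (not_lt.2 hz0.le), hsdef, mul_inv, Complex.inv_I, ← hudef]
    have harg1 : -(Complex.I * s) = (u : ℂ) := by
      rw [hsdef, ← mul_assoc, Complex.I_mul_I]; ring
    have harg2 : -(Complex.I * -s) = -(u : ℂ) := by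
      rw [hsdef]; ring_nf; rw [Complex.I_sq]; ring
    have hh := hsplit s
    rw [harg1] at hh
    have hh' := hsplit (-s)
    rw [harg2, neg_neg, neg_sq] at hh'
    set A := ‖(Z2.map (algebraMap ℝ ℂ)).eval s‖ with hAdef
    have hconj : ‖(Z2.map (algebraMap ℝ ℂ)).eval (-s)‖ = A := by
      rw [hAdef, ← evalC_abs_conj Z2 s]
      congr 1
      rw [hsdef]
      simp [Complex.ext_iff]
    have habsh : ‖(Z1.map (algebraMap ℝ ℂ)).eval (u : ℂ) *
        (Z2.map (algebraMap ℝ ℂ)).eval s‖ = |Z1.eval u| * A := by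
      rw [norm_mul, evalC_real, Complex.norm_real, Real.norm_eq_abs]
    have habsh' : ‖(Z1.map (algebraMap ℝ ℂ)).eval (-(u : ℂ)) *
        (Z2.map (algebraMap ℝ ℂ)).eval (-s)‖ = |Z1.eval (-u)| * A := by
      rw [norm_mul, hconj, show (-(u:ℂ)) = ((-u : ℝ) : ℂ) by push_cast; ring,
        evalC_real, Complex.norm_real, Real.norm_eq_abs]
    have hdne : Z1.eval (-u) ≠ 0 := hden1 u huI
    have hdpos : (0:ℝ) < |Z1.eval (-u)| := abs_pos.2 hdne
    have hb : |Z1.eval u| ≤ e1 * |Z1.eval (-u)| := by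
      have := hbd1 u huI
      rwa [abs_div, div_le_iff₀ hdpos] at this
    have hApos : 0 < A := by
      rw [hAdef]
      apply norm_pos_iff.2
      apply evalC_ne_of_im Z2 _ _ hZ2roots
      rw [hsdef]; simp [hu0.ne']
    have hne : (Z1.map (algebraMap ℝ ℂ)).eval (-(u : ℂ)) *
        (Z2.map (algebraMap ℝ ℂ)).eval (-s) ≠ 0 := by
      intro h0
      have := habsh'
      rw [h0, norm_zero] at this
      nlinarith
    have hratio : ‖(Z1.map (algebraMap ℝ ℂ)).eval (u : ℂ) *
        (Z2.map (algebraMap ℝ ℂ)).eval s‖ ≤ max e1 e2 *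
        ‖(Z1.map (algebraMap ℝ ℂ)).eval (-(u : ℂ)) *
        (Z2.map (algebraMap ℝ ℂ)).eval (-s)‖ := by
      rw [habsh, habsh']
      have he1m : e1 ≤ max e1 e2 := le_max_left _ _
      calc |Z1.eval u| * A ≤ (e1 * |Z1.eval (-u)|) * A :=
            mul_le_mul_of_nonneg_right hb hApos.le
        _ ≤ (max e1 e2 * |Z1.eval (-u)|) * A :=
            mul_le_mul_of_nonneg_right
              (mul_le_mul_of_nonneg_right he1m (abs_nonneg _)) hApos.le
        _ = max e1 e2 * (|Z1.eval (-u)| * A) := by ring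
    rw [hF]
    exact key P Q (z : ℂ) s _ _ (max e1 e2) hh hh' hs2 hsne hne hratio hε0 hε
  · -- z ∈ [a2, b2], z > 0
    have hz0 : 0 < z := lt_of_lt_of_le ha2 hz.1
    set u := Real.sqrt z with hudef
    have hu0 : 0 < u := Real.sqrt_pos.2 hz0
    have hu2 : u ^ 2 = z := Real.sq_sqrt hz0.le
    have huI : u ∈ Set.Icc (Real.sqrt a2) (Real.sqrt b2) :=
      ⟨Real.sqrt_le_sqrt hz.1, Real.sqrt_le_sqrt hz.2⟩
    set s : ℂ := (u : ℂ) with hsdef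
    have hs2 : s ^ 2 = (z : ℂ) := by
      rw [hsdef, ← Complex.ofReal_pow, hu2]
    have hsne : s ≠ 0 := by
      rw [hsdef]; exact_mod_cast hu0.ne'
    have hF : Fbranch z = s⁻¹ := by
      rw [Fbranch, if_pos hz0]
    have harg2 : -(Complex.I * -s) = Complex.I * s := by ring
    have hh := hsplit s
    have hh' := hsplit (-s)
    rw [harg2, neg_neg, neg_sq] at hh'
    set A := ‖(Z1.map (algebraMap ℝ ℂ)).eval (Complex.I * s)‖ with hAdef
    have hconj : ‖(Z1.map (algebraMap ℝ ℂ)).eval (-(Complex.I * s))‖ = A := by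
      rw [hAdef, ← evalC_abs_conj Z1 (Complex.I * s)]
      congr 1
      rw [hsdef]
      simp [Complex.ext_iff]
    have habsh : ‖(Z1.map (algebraMap ℝ ℂ)).eval (-(Complex.I * s)) *
        (Z2.map (algebraMap ℝ ℂ)).eval s‖ = A * |Z2.eval u| := by
      rw [norm_mul, hconj, hsdef, evalC_real, Complex.norm_real, Real.norm_eq_abs]
    have habsh' : ‖(Z1.map (algebraMap ℝ ℂ)).eval (Complex.I * s) *
        (Z2.map (algebraMap ℝ ℂ)).eval (-s)‖ = A * |Z2.eval (-u)| := by
      rw [norm_mul, hsdef, show (-(u:ℂ)) = ((-u : ℝ) : ℂ) by push_cast; ring,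
        evalC_real, Complex.norm_real, Real.norm_eq_abs]
    have hdne : Z2.eval (-u) ≠ 0 := hden2 u huI
    have hdpos : (0:ℝ) < |Z2.eval (-u)| := abs_pos.2 hdne
    have hb : |Z2.eval u| ≤ e2 * |Z2.eval (-u)| := by
      have := hbd2 u huI
      rwa [abs_div, div_le_iff₀ hdpos] at this
    have hApos : 0 < A := by
      rw [hAdef]
      apply norm_pos_iff.2
      apply evalC_ne_of_im Z1 _ _ hZ1roots
      rw [hsdef]; simp [hu0.ne']
    have hne : (Z1.map (algebraMap ℝ ℂ)).eval (Complex.I * s) *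
        (Z2.map (algebraMap ℝ ℂ)).eval (-s) ≠ 0 := by
      intro h0
      have := habsh'
      rw [h0, norm_zero] at this
      nlinarith
    have hratio : ‖(Z1.map (algebraMap ℝ ℂ)).eval (-(Complex.I * s)) *
        (Z2.map (algebraMap ℝ ℂ)).eval s‖ ≤ max e1 e2 *
        ‖(Z1.map (algebraMap ℝ ℂ)).eval (Complex.I * s) *
        (Z2.map (algebraMap ℝ ℂ)).eval (-s)‖ := by
      rw [habsh, habsh']
      have he2m : e2 ≤ max e1 e2 := le_max_right _ _
      calc A * |Z2.eval u| ≤ A * (e2 * |Z2.eval (-u)|) :=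
            mul_le_mul_of_nonneg_left hb hApos.le
        _ ≤ A * (max e1 e2 * |Z2.eval (-u)|) :=
            mul_le_mul_of_nonneg_left
              (mul_le_mul_of_nonneg_right he2m (abs_nonneg _)) hApos.le
        _ = max e1 e2 * (A * |Z2.eval (-u)|) := by ring
    rw [hF]
    exact key P Q (z : ℂ) s _ _ (max e1 e2) hh hh' hs2 hsne hne hratio hε0 hε
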